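/- If r and s are integers with 1 ≤ r < s, then the edge Roman domination number of the complete bipartite graph K_{r,s} equals 2r. -/

import Mathlib

open Finset SimpleGraph

/-- An edge Roman dominating function: values in {0,1,2} on edges (0 elsewhere),
and every edge with value 0 is adjacent to a distinct edge with value 2
sharing an endpoint with it. -/
def EdgeRDF {V : Type*} (G : SimpleGraph V) (f : Sym2 V → ℕ) : Prop :=
  (∀ e, f e ≤ 2) ∧ (∀ e, e ∉ G.edgeSet → f e = 0) ∧
  (∀ e ∈ G.edgeSet, f e = 0 →
    ∃ e' ∈ G.edgeSet, f e' = 2 ∧ e' ≠ e ∧ ∃ v, v ∈ e ∧ v ∈ e')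

/-- The edge Roman domination number: the minimum weight of an
edge Roman dominating function. -/
noncomputable def edgeRomanNumber (V : Type*) [Fintype V] [DecidableEq V]
    (G : SimpleGraph V) : ℕ :=
  sInf {w | ∃ f : Sym2 V → ℕ, EdgeRDF G f ∧ w = ∑ e : Sym2 V, f e}

lemma cb_mem_edgeSet {r s : ℕ} (e : Sym2 (Fin r ⊕ Fin s)) :
    e ∈ (completeBipartiteGraph (Fin r) (Fin s)).edgeSet ↔
      ∃ i j, e = s(Sum.inl i, Sum.inr j) := by
  induction e using Sym2.ind with
  | _ a b =>
    rcases a with i | j <;> rcases b with i' | j' <;>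
      simp [completeBipartiteGraph, Sym2.eq_iff]

/-- Lower bound: any edge Roman dominating function of `K_{r,s}` (with `r < s`)
has weight at least `2r`. -/
lemma cb_lower_bound {r s : ℕ} (hr : 1 ≤ r) (hrs : r < s)
    (f : Sym2 (Fin r ⊕ Fin s) → ℕ)
    (hf : EdgeRDF (completeBipartiteGraph (Fin r) (Fin s)) f) :
    2 * r ≤ ∑ e : Sym2 (Fin r ⊕ Fin s), f e := by
  classical
  obtain ⟨hle, hzero, hdom⟩ := hf
  set T2 : Finset (Sym2 (Fin r ⊕ Fin s)) := univ.filter (fun e => f e = 2) with hT2def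
  set T1 : Finset (Sym2 (Fin r ⊕ Fin s)) := univ.filter (fun e => f e = 1) with hT1def
  set L2 : Finset (Fin r) :=
    univ.filter (fun i => ∃ j, f s(Sum.inl i, Sum.inr j) = 2) with hL2def
  set R2 : Finset (Fin s) :=
    univ.filter (fun j => ∃ i, f s(Sum.inl i, Sum.inr j) = 2) with hR2def
  -- |L2| ≤ |T2|
  have hL2card : L2.card ≤ T2.card := by
    apply Finset.card_le_card_of_injOn
      (fun i => if h : ∃ j, f s(Sum.inl i, Sum.inr j) = 2
        then s(Sum.inl i, Sum.inr h.choose) else s(Sum.inl i, Sum.inr ⟨0, by omega⟩))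
    · intro i hi
      simp only [Finset.mem_coe, hL2def, mem_filter, mem_univ, true_and] at hi
      simp only [Finset.mem_coe, dif_pos hi, hT2def, mem_filter, mem_univ, true_and]
      exact hi.choose_spec
    · intro i hi i' hi' hii'
      simp only [hL2def, Finset.coe_filter, Set.mem_setOf_eq, mem_univ, true_and] at hi hi'
      simp only [dif_pos hi, dif_pos hi', Sym2.eq_iff] at hii'
      rcases hii' with ⟨h1, _⟩ | ⟨h1, _⟩ <;> simp_all
  -- |R2| ≤ |T2|
  have hR2card : R2.card ≤ T2.card := by
    apply Finset.card_le_card_of_injOn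
      (fun j => if h : ∃ i, f s(Sum.inl i, Sum.inr j) = 2
        then s(Sum.inl h.choose, Sum.inr j) else s(Sum.inl ⟨0, hr⟩, Sum.inr j))
    · intro j hj
      simp only [Finset.mem_coe, hR2def, mem_filter, mem_univ, true_and] at hj
      simp only [Finset.mem_coe, dif_pos hj, hT2def, mem_filter, mem_univ, true_and]
      exact hj.choose_spec
    · intro j hj j' hj' hjj'
      simp only [hR2def, Finset.coe_filter, Set.mem_setOf_eq, mem_univ, true_and] at hj hj'
      simp only [dif_pos hj, dif_pos hj', Sym2.eq_iff] at hjj'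
      rcases hjj' with ⟨_, h2⟩ | ⟨h1, _⟩ <;> simp_all
  -- every edge avoiding L2 and R2 has value 1
  have hone : ∀ i ∉ L2, ∀ j ∉ R2, f s(Sum.inl i, Sum.inr j) = 1 := by
    intro i hi j hj
    simp only [hL2def, mem_filter, mem_univ, true_and, not_exists] at hi
    simp only [hR2def, mem_filter, mem_univ, true_and, not_exists] at hj
    have hmem : s(Sum.inl i, Sum.inr j) ∈
        (completeBipartiteGraph (Fin r) (Fin s)).edgeSet := by
      rw [cb_mem_edgeSet]; exact ⟨i, j, rfl⟩
    have hne2 : f s(Sum.inl i, Sum.inr j) ≠ 2 := hi j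
    have hne0 : f s(Sum.inl i, Sum.inr j) ≠ 0 := by
      intro h0
      obtain ⟨e', he'mem, he'2, -, v, hv1, hv2⟩ := hdom _ hmem h0
      obtain ⟨i', j', rfl⟩ := (cb_mem_edgeSet e').mp he'mem
      rw [Sym2.mem_iff] at hv1 hv2
      rcases hv1 with rfl | rfl <;> rcases hv2 with h | h
      · obtain rfl : i' = i := by injection h.symm
        exact hi j' he'2
      · exact absurd h (by simp)
      · exact absurd h (by simp)
      · obtain rfl : j' = j := by injection h.symm
        exact hj i' he'2
    have := hle s(Sum.inl i, Sum.inr j)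
    omega
  -- (r - |L2|) * (s - |R2|) ≤ |T1|
  have hT1card : (r - L2.card) * (s - R2.card) ≤ T1.card := by
    have hcard : ((univ \ L2) ×ˢ (univ \ R2)).card = (r - L2.card) * (s - R2.card) := by
      rw [Finset.card_product, Finset.card_sdiff_of_subset (subset_univ _),
        Finset.card_sdiff_of_subset (subset_univ _), Finset.card_univ, Finset.card_univ,
        Fintype.card_fin, Fintype.card_fin]
    rw [← hcard]
    apply Finset.card_le_card_of_injOn (fun p => s(Sum.inl p.1, Sum.inr p.2))
    · rintro ⟨i, j⟩ hij
      simp only [Finset.mem_coe, Finset.mem_product, Finset.mem_sdiff, mem_univ, true_and] at hij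
      simp only [Finset.mem_coe, hT1def, mem_filter, mem_univ, true_and]
      exact hone i hij.1 j hij.2
    · rintro ⟨i, j⟩ - ⟨i', j'⟩ - h
      simp only [Sym2.eq_iff] at h
      rcases h with ⟨h1, h2⟩ | ⟨h1, _⟩
      · obtain rfl : i = i' := by injection h1
        obtain rfl : j = j' := by injection h2
        rfl
      · exact absurd h1 (by simp)
  -- weight bound
  have hsum : 2 * T2.card + T1.card ≤ ∑ e : Sym2 (Fin r ⊕ Fin s), f e := by
    have hdisj : Disjoint T2 T1 := by
      rw [Finset.disjoint_left]
      intro e he2 he1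
      rw [hT2def, mem_filter] at he2
      rw [hT1def, mem_filter] at he1
      omega
    calc 2 * T2.card + T1.card = ∑ e ∈ T2, f e + ∑ e ∈ T1, f e := by
          rw [Finset.sum_congr rfl (fun e he => (mem_filter.mp he).2),
            Finset.sum_congr rfl (fun e he => (mem_filter.mp he).2)]
          simp [mul_comm, hT2def, hT1def]
      _ = ∑ e ∈ T2 ∪ T1, f e := (Finset.sum_union hdisj).symm
      _ ≤ ∑ e : Sym2 (Fin r ⊕ Fin s), f e :=
          Finset.sum_le_sum_of_subset (subset_univ _)
  -- arithmetic conclusion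
  rcases le_or_gt r T2.card with ht | ht
  · omega
  · have h1 : (r - T2.card) * 2 ≤ (r - T2.card) * (s - T2.card) :=
      Nat.mul_le_mul_left _ (by omega)
    have h2 : (r - T2.card) * (s - T2.card) ≤ (r - L2.card) * (s - R2.card) :=
      Nat.mul_le_mul (by omega) (by omega)
    have h3 : (r - T2.card) * 2 = 2 * r - 2 * T2.card := by omega
    omega

/-- If `1 ≤ r < s`, then the edge Roman domination number of the complete
bipartite graph `K_{r,s}` equals `2r`. -/
theorem edgeRomanNumber_completeBipartite_lt (r s : ℕ) (hr : 1 ≤ r) (hrs : r < s) :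
    edgeRomanNumber (Fin r ⊕ Fin s) (completeBipartiteGraph (Fin r) (Fin s)) = 2 * r := by
  classical
  have hrs' : r ≤ s := hrs.le
  -- the upper-bound function
  set g : Fin r → Sym2 (Fin r ⊕ Fin s) :=
    fun i => s(Sum.inl i, Sum.inr (Fin.castLE hrs' i)) with hgdef
  have hginj : Function.Injective g := by
    intro i i' h
    simp only [hgdef, Sym2.eq_iff] at h
    rcases h with ⟨h1, _⟩ | ⟨h1, _⟩
    · injection h1
    · exact absurd h1 (by simp)
  set S : Finset (Sym2 (Fin r ⊕ Fin s)) := univ.image g with hSdef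
  set f : Sym2 (Fin r ⊕ Fin s) → ℕ := fun e => if e ∈ S then 2 else 0 with hfdef
  have hfS : ∀ e ∈ S, ∃ i, e = g i := by
    intro e he
    simp only [hSdef, mem_image, mem_univ, true_and] at he
    obtain ⟨i, hi⟩ := he
    exact ⟨i, hi.symm⟩
  have hERDF : EdgeRDF (completeBipartiteGraph (Fin r) (Fin s)) f := by
    refine ⟨fun e => ?_, fun e he => ?_, fun e he h0 => ?_⟩
    · simp only [hfdef]; split_ifs <;> omega
    · simp only [hfdef, ite_eq_right_iff]
      intro heS
      obtain ⟨i, rfl⟩ := hfS e heS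
      exact absurd ((cb_mem_edgeSet _).mpr ⟨i, Fin.castLE hrs' i, rfl⟩) he
    · obtain ⟨i, j, rfl⟩ := (cb_mem_edgeSet e).mp he
      have heS : s(Sum.inl i, Sum.inr j) ∉ S := by
        intro hmem
        simp only [hfdef, if_pos hmem] at h0
        omega
      refine ⟨g i, (cb_mem_edgeSet _).mpr ⟨i, Fin.castLE hrs' i, rfl⟩, ?_, ?_,
        Sum.inl i, by simp, by simp [hgdef]⟩
      · simp only [hfdef, if_pos (show g i ∈ S from Finset.mem_image_of_mem g (mem_univ i))]
      · intro h
        exact heS (h ▸ Finset.mem_image_of_mem g (mem_univ i))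
  have hwsum : ∑ e : Sym2 (Fin r ⊕ Fin s), f e = 2 * r := by
    simp only [hfdef]
    rw [Finset.sum_ite_mem, Finset.univ_inter, Finset.sum_const, smul_eq_mul,
      hSdef, Finset.card_image_of_injective _ hginj, Finset.card_univ, Fintype.card_fin,
      mul_comm]
  have hmem : 2 * r ∈ {w | ∃ f : Sym2 (Fin r ⊕ Fin s) → ℕ,
      EdgeRDF (completeBipartiteGraph (Fin r) (Fin s)) f ∧
      w = ∑ e : Sym2 (Fin r ⊕ Fin s), f e} := ⟨f, hERDF, hwsum.symm⟩
  apply le_antisymm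
  · exact Nat.sInf_le hmem
  · obtain ⟨f', hf', hw'⟩ := Nat.sInf_mem ⟨2 * r, hmem⟩
    rw [edgeRomanNumber, hw']
    exact cb_lower_bound hr hrs f' hf'
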